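/- For any commutative ring A the following are equivalent: (1) the graph Γ(A) is connected; (2) for every unimodular row (a,b) ∈ A² there exist a₀, …, aₙ ∈ A such that the class of (a,b) equals ∞·S(aₙ)S(aₙ₋₁)···S(a₀); (3) every unimodular pair (a,b) satisfies a weak Euclidean algorithm, i.e. there exist a₀, …, aₙ ∈ A and r₀, …, rₙ₋₁ ∈ A such that, setting r₋₂ := a, r₋₁ := b and rₙ := 0, one has r_{k−2} = a_k r_{k−1} + r_k for all 0 ≤ k ≤ n; (4) A is a GE₂-ring, i.e. GE₂(A) = GL₂(A). -/

import Mathlib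

open Matrix

/-- A row `(a,b) ∈ A²` is unimodular if `∃ r s, r*a + s*b = 1`. -/
def IsUnimod {A : Type*} [CommRing A] (v : Fin 2 → A) : Prop :=
  ∃ r s : A, r * v 0 + s * v 1 = 1

/-- Unimodular rows of length 2. -/
abbrev UnimodRow (A : Type*) [CommRing A] := {v : Fin 2 → A // IsUnimod v}

/-- Two unimodular rows are equivalent if they differ by multiplication by a unit. -/
instance vertexSetoid (A : Type*) [CommRing A] : Setoid (UnimodRow A) where
  r v w := ∃ u : Aˣ, (u : A) • v.1 = w.1
  iseqv := by
    refine ⟨fun v => ⟨1, by simp⟩, ?_, ?_⟩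
    · rintro v w ⟨u, h⟩
      exact ⟨u⁻¹, by rw [← h, smul_smul, Units.inv_mul, one_smul]⟩
    · rintro v w z ⟨u, h⟩ ⟨u', h'⟩
      exact ⟨u' * u, by rw [← h', ← h, smul_smul, ← Units.val_mul]⟩

/-- The vertices of the graph Γ(A): unimodular rows up to multiplication by a unit. -/
def Vertex (A : Type*) [CommRing A] := Quotient (vertexSetoid A)

/-- The graph Γ(A). -/
def GammaGraph (A : Type*) [CommRing A] : SimpleGraph (Vertex A) where
  Adj x y := x ≠ y ∧ ∃ v w : UnimodRow A, x = ⟦v⟧ ∧ y = ⟦w⟧ ∧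
    IsUnit (v.1 0 * w.1 1 - v.1 1 * w.1 0)
  symm := ⟨by
    rintro x y ⟨hne, v, w, hx, hy, hd⟩
    refine ⟨hne.symm, w, v, hy, hx, ?_⟩
    have h : w.1 0 * v.1 1 - w.1 1 * v.1 0 = -(v.1 0 * w.1 1 - v.1 1 * w.1 0) := by ring
    rw [h]
    exact hd.neg⟩
  loopless := ⟨fun x h => h.1 rfl⟩

theorem isUnimod_vecMul {A : Type*} [CommRing A] {v : Fin 2 → A} (h : IsUnimod v)
    (M : GL (Fin 2) A) : IsUnimod (vecMul v (M : Matrix (Fin 2) (Fin 2) A)) := by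
  obtain ⟨r, s, hrs⟩ := h
  set w : Fin 2 → A := ((M⁻¹ : GL (Fin 2) A) : Matrix (Fin 2) (Fin 2) A) *ᵥ ![r, s] with hw
  refine ⟨w 0, w 1, ?_⟩
  have h1 : vecMul v (M : Matrix (Fin 2) (Fin 2) A) ⬝ᵥ w = v ⬝ᵥ ![r, s] := by
    rw [hw, ← dotProduct_mulVec, mulVec_mulVec, Units.mul_inv, one_mulVec]
  simp only [dotProduct, Fin.sum_univ_two] at h1
  simp only [Matrix.cons_val_zero, Matrix.cons_val_one, Matrix.head_cons] at h1
  linear_combination h1 + hrs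

/-- The right action of GL₂(A) on the vertices of Γ(A). -/
def vertexMul {A : Type*} [CommRing A] (x : Vertex A) (M : GL (Fin 2) A) : Vertex A :=
  Quotient.map (fun v => ⟨vecMul v.1 (M : Matrix (Fin 2) (Fin 2) A), isUnimod_vecMul v.2 M⟩)
    (by
      rintro v w ⟨u, h⟩
      refine ⟨u, ?_⟩
      show (u : A) • (vecMul v.1 (M : Matrix (Fin 2) (Fin 2) A)) =
        vecMul w.1 (M : Matrix (Fin 2) (Fin 2) A)
      rw [← h, Matrix.smul_vecMul]) x

/-- The vertex ∞ = [(1,0)]. -/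
def vInf (A : Type*) [CommRing A] : Vertex A := ⟦⟨![1, 0], ⟨1, 0, by norm_num⟩⟩⟧

/-- The vertex 0 = [(0,1)]. -/
def vZero (A : Type*) [CommRing A] : Vertex A := ⟦⟨![0, 1], ⟨0, 1, by norm_num⟩⟩⟧

/-- The vertex 1 = [(1,1)]. -/
def vOne (A : Type*) [CommRing A] : Vertex A := ⟦⟨![1, 1], ⟨1, 0, by norm_num⟩⟩⟧
open Matrix

/-- E(a) = [[a,1],[-1,0]] as an element of GL₂. -/
def Egl {A : Type*} [CommRing A] (a : A) : GL (Fin 2) A :=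
  ⟨!![a, 1; -1, 0], !![0, -1; 1, a],
    by ext i j; fin_cases i <;> fin_cases j <;> simp [Matrix.mul_apply, Fin.sum_univ_two],
    by ext i j; fin_cases i <;> fin_cases j <;> simp [Matrix.mul_apply, Fin.sum_univ_two]⟩

/-- S(a) = [[a,1],[1,0]] as an element of GL₂. -/
def Sgl {A : Type*} [CommRing A] (a : A) : GL (Fin 2) A :=
  ⟨!![a, 1; 1, 0], !![0, 1; 1, -a],
    by ext i j; fin_cases i <;> fin_cases j <;> simp [Matrix.mul_apply, Fin.sum_univ_two],
    by ext i j; fin_cases i <;> fin_cases j <;> simp [Matrix.mul_apply, Fin.sum_univ_two]⟩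

/-- The elementary matrix E₁₂(a) = [[1,a],[0,1]] in GL₂. -/
def E12gl {A : Type*} [CommRing A] (a : A) : GL (Fin 2) A :=
  ⟨!![1, a; 0, 1], !![1, -a; 0, 1],
    by ext i j; fin_cases i <;> fin_cases j <;> simp [Matrix.mul_apply, Fin.sum_univ_two],
    by ext i j; fin_cases i <;> fin_cases j <;> simp [Matrix.mul_apply, Fin.sum_univ_two]⟩

/-- The elementary matrix E₂₁(a) = [[1,0],[a,1]] in GL₂. -/
def E21gl {A : Type*} [CommRing A] (a : A) : GL (Fin 2) A :=
  ⟨!![1, 0; a, 1], !![1, 0; -a, 1],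
    by ext i j; fin_cases i <;> fin_cases j <;> simp [Matrix.mul_apply, Fin.sum_univ_two],
    by ext i j; fin_cases i <;> fin_cases j <;> simp [Matrix.mul_apply, Fin.sum_univ_two]⟩

/-- GE₂(A): the subgroup of GL₂(A) generated by the elementary matrices and the
invertible diagonal matrices. -/
def GE2 (A : Type*) [CommRing A] : Subgroup (GL (Fin 2) A) :=
  Subgroup.closure
    ({M | ∃ a : A, M = E12gl a} ∪ {M | ∃ a : A, M = E21gl a} ∪
      {M | (M : Matrix (Fin 2) (Fin 2) A) 0 1 = 0 ∧ (M : Matrix (Fin 2) (Fin 2) A) 1 0 = 0})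

/-- Given `f : A → G` and a tuple `(a 0, …, a (n-1))`, the product
`f (a (n-1)) * ⋯ * f (a 1) * f (a 0)` (rightmost factor first). -/
def wordProd {A : Type*} {G : Type*} [Monoid G] (f : A → G) :
    {n : ℕ} → (Fin n → A) → G
  | 0, _ => 1
  | n + 1, a => f (a (Fin.last n)) * wordProd f (fun j : Fin n => a j.castSucc)

/-- The pair (a,b) satisfies a weak Euclidean algorithm: there are a₀,…,aₙ and
r₀,…,r_{n-1} such that, with r₋₂ := a, r₋₁ := b and rₙ := 0, one has
r_{k-2} = a_k r_{k-1} + r_k for 0 ≤ k ≤ n.  (Here `r (k+2)` plays the role of `r_k`.) -/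
def WeakEuclidean {A : Type*} [CommRing A] (a b : A) : Prop :=
  ∃ (n : ℕ) (q : Fin (n + 1) → A) (r : ℕ → A),
    r 0 = a ∧ r 1 = b ∧ r (n + 2) = 0 ∧
    ∀ k : Fin (n + 1), r k.1 = q k * r (k.1 + 1) + r (k.1 + 2)

set_option linter.unusedSectionVars false
section Aux
variable {A : Type*} [CommRing A]

lemma vecMul2 (x : Fin 2 → A) (P : Matrix (Fin 2) (Fin 2) A) :
    vecMul x P = ![x 0 * P 0 0 + x 1 * P 1 0, x 0 * P 0 1 + x 1 * P 1 1] := by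
  funext i
  fin_cases i <;> simp [Matrix.vecMul, dotProduct, Fin.sum_univ_two]

lemma det2_vecMul (v w : Fin 2 → A) (M : Matrix (Fin 2) (Fin 2) A) :
    vecMul v M 0 * vecMul w M 1 - vecMul v M 1 * vecMul w M 0
      = (v 0 * w 1 - v 1 * w 0) * M.det := by
  simp [vecMul2, Matrix.det_fin_two]; ring

lemma vecMul_e0 (M : Matrix (Fin 2) (Fin 2) A) :
    vecMul ![(1:A), 0] M = ![M 0 0, M 0 1] := by
  simp [vecMul2]

lemma row_eq (v : Fin 2 → A) : v = ![v 0, v 1] := by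
  funext i; fin_cases i <;> simp

lemma vecMul_wordProd {n : ℕ} (c : Fin (n + 1) → A) (r : ℕ → A)
    (hr : ∀ k : Fin (n + 1), r k.1 = c k * r (k.1 + 1) + r (k.1 + 2)) :
    vecMul ![r (n + 1), r (n + 2)] ((wordProd Sgl c : GL (Fin 2) A) : Matrix (Fin 2) (Fin 2) A)
      = ![r 0, r 1] := by
  induction n with
  | zero =>
      have h0 := hr 0
      simp only [Fin.val_zero] at h0
      have hc : c (Fin.last 0) = c 0 := congrArg c rfl
      show vecMul _ ((Sgl (c (Fin.last 0)) * 1 : GL (Fin 2) A) : Matrix (Fin 2) (Fin 2) A) = _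
      rw [mul_one, hc]
      funext i
      fin_cases i <;> simp [Sgl, vecMul2] <;> linear_combination -h0
  | succ n ih =>
      show vecMul _ ((Sgl (c (Fin.last (n+1))) * wordProd Sgl (fun j : Fin (n+1) => c j.castSucc)
        : GL (Fin 2) A) : Matrix (Fin 2) (Fin 2) A) = _
      rw [Units.val_mul, ← Matrix.vecMul_vecMul]
      have h1 : vecMul ![r (n + 2), r (n + 3)] ((Sgl (c (Fin.last (n+1)))) :
          Matrix (Fin 2) (Fin 2) A) = ![r (n + 1), r (n + 2)] := by
        have hl := hr (Fin.last (n+1))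
        simp only [Fin.val_last] at hl
        funext i
        fin_cases i <;> simp [Sgl, vecMul2] <;> linear_combination -hl
      rw [h1]
      exact ih (fun j => c j.castSucc) (fun k => by
        have := hr k.castSucc
        simpa using this)
lemma vertexMul_mk (v : UnimodRow A) (M : GL (Fin 2) A) :
    vertexMul (⟦v⟧ : Vertex A) M
      = ⟦⟨vecMul v.1 (M : Matrix (Fin 2) (Fin 2) A), isUnimod_vecMul v.2 M⟩⟧ := rfl

lemma vertexMul_mul (x : Vertex A) (M N : GL (Fin 2) A) :
    vertexMul (vertexMul x M) N = vertexMul x (M * N) := by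
  induction x using Quotient.ind with
  | _ v =>
    rw [vertexMul_mk, vertexMul_mk, vertexMul_mk]
    congr 1
    apply Subtype.ext
    simp [Matrix.vecMul_vecMul, Units.val_mul]

lemma vertexMul_one (x : Vertex A) : vertexMul x 1 = x := by
  induction x using Quotient.ind with
  | _ v =>
    rw [vertexMul_mk]
    congr 1
    apply Subtype.ext
    show vecMul v.1 _ = _
    rw [Units.val_one, Matrix.vecMul_one]

lemma vertexMul_injective (M : GL (Fin 2) A) {x y : Vertex A}
    (h : vertexMul x M = vertexMul y M) : x = y := by
  have := congrArg (fun z => vertexMul z M⁻¹) h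
  simpa [vertexMul_mul, vertexMul_one] using this

lemma isUnit_det_gl (M : GL (Fin 2) A) : IsUnit ((M : Matrix (Fin 2) (Fin 2) A)).det :=
  (Matrix.isUnit_iff_isUnit_det _).mp M.isUnit

lemma adj_vertexMul {x y : Vertex A} (M : GL (Fin 2) A)
    (h : (GammaGraph A).Adj x y) : (GammaGraph A).Adj (vertexMul x M) (vertexMul y M) := by
  unfold GammaGraph at h ⊢
  obtain ⟨hne, v, w, hx, hy, hd⟩ := h
  subst hx; subst hy
  refine ⟨fun he => hne (vertexMul_injective M he), _, _, vertexMul_mk v M, vertexMul_mk w M, ?_⟩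
  show IsUnit (vecMul v.1 _ 0 * vecMul w.1 _ 1 - vecMul v.1 _ 1 * vecMul w.1 _ 0)
  rw [det2_vecMul]
  exact hd.mul (isUnit_det_gl M)

lemma reach_vertexMul {x y : Vertex A} (M : GL (Fin 2) A)
    (h : (GammaGraph A).Reachable x y) :
    (GammaGraph A).Reachable (vertexMul x M) (vertexMul y M) := by
  obtain ⟨p⟩ := h
  induction p with
  | nil => exact SimpleGraph.Reachable.refl _
  | cons h p ih => exact (SimpleGraph.Adj.reachable (adj_vertexMul M h)).trans ih

/-- Reachability of classes of rows with unit "determinant". -/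
lemma reach_of_det (v w : UnimodRow A)
    (hd : IsUnit (v.1 0 * w.1 1 - v.1 1 * w.1 0)) :
    (GammaGraph A).Reachable (⟦v⟧ : Vertex A) ⟦w⟧ := by
  by_cases he : (⟦v⟧ : Vertex A) = ⟦w⟧
  · rw [he]; exact SimpleGraph.Reachable.refl _
  · exact SimpleGraph.Adj.reachable (by unfold GammaGraph; exact ⟨he, v, w, rfl, rfl, hd⟩)

/-- Neighbors of ∞ have the form ∞ · S(a). -/
lemma adj_vInf {y : Vertex A} (h : (GammaGraph A).Adj (vInf A) y) :
    ∃ a : A, y = vertexMul (vInf A) (Sgl a) := by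
  unfold GammaGraph at h
  obtain ⟨hne, v, w, hx, hy, hd⟩ := h
  obtain ⟨t, ht⟩ := Quotient.eq.mp hx
  have hv0 : v.1 0 = (t : A) := by
    rw [← ht]; simp
  have hv1 : v.1 1 = 0 := by
    rw [← ht]; simp
  rw [hv0, hv1] at hd
  have hw1 : IsUnit (w.1 1) := by
    have : IsUnit ((t : A) * w.1 1) := by simpa using hd
    exact isUnit_of_mul_isUnit_right this
  obtain ⟨e, he⟩ := hw1
  refine ⟨w.1 0 * (e⁻¹ : Aˣ), ?_⟩
  rw [hy, show vInf A = ⟦⟨![1,0],⟨1,0,by norm_num⟩⟩⟧ from rfl, vertexMul_mk]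
  apply Quotient.sound
  refine ⟨e⁻¹, ?_⟩
  show ((e⁻¹ : Aˣ) : A) • w.1 = vecMul ![1, 0] ((Sgl (w.1 0 * (e⁻¹ : Aˣ))) : Matrix (Fin 2) (Fin 2) A)
  funext i
  fin_cases i
  · simp [Sgl, vecMul2]
    ring
  · show ((e⁻¹:Aˣ):A) * w.1 1 = _
    rw [← he]
    simp [Sgl, vecMul2, e.inv_mul]
/-- Diagonal matrix in GL₂. -/
def diagGL (u d : Aˣ) : GL (Fin 2) A :=
  ⟨!![(u:A), 0; 0, (d:A)], !![((u⁻¹:Aˣ):A), 0; 0, ((d⁻¹:Aˣ):A)],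
    by ext i j; fin_cases i <;> fin_cases j <;>
      simp [Matrix.mul_apply, Fin.sum_univ_two],
    by ext i j; fin_cases i <;> fin_cases j <;>
      simp [Matrix.mul_apply, Fin.sum_univ_two]⟩

lemma E12gl_mem (a : A) : E12gl a ∈ GE2 A :=
  Subgroup.subset_closure (Or.inl (Or.inl ⟨a, rfl⟩))

lemma E21gl_mem (a : A) : E21gl a ∈ GE2 A :=
  Subgroup.subset_closure (Or.inl (Or.inr ⟨a, rfl⟩))

lemma diagGL_mem (u d : Aˣ) : diagGL u d ∈ GE2 A :=
  Subgroup.subset_closure (Or.inr ⟨by simp [diagGL], by simp [diagGL]⟩)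

lemma Sgl_eq (a : A) :
    Sgl a = E12gl a * diagGL 1 (-1) * E12gl 1 * E21gl (-1) * E12gl 1 := by
  apply Units.ext
  simp only [Units.val_mul]
  show (Sgl a).val = _
  simp only [Sgl, E12gl, E21gl, diagGL, Matrix.mul_fin_two]
  norm_num

lemma Sgl_mem (a : A) : Sgl a ∈ GE2 A := by
  rw [Sgl_eq]
  exact mul_mem (mul_mem (mul_mem (mul_mem (E12gl_mem a) (diagGL_mem 1 (-1)))
    (E12gl_mem 1)) (E21gl_mem (-1))) (E12gl_mem 1)

lemma wordProd_Sgl_mem {n : ℕ} (c : Fin n → A) : wordProd Sgl c ∈ GE2 A := by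
  induction n with
  | zero => exact one_mem _
  | succ n ih => exact mul_mem (Sgl_mem _) (ih _)

lemma wordProd_eq {G : Type*} [Monoid G] (f : A → G) {n : ℕ} (a : Fin (n + 1) → A) :
    wordProd f a = f (a (Fin.last n)) * wordProd f (fun j : Fin n => a j.castSucc) := rfl

lemma wordProd_snoc {n : ℕ} (c : Fin (n + 1) → A) (a : A) :
    wordProd Sgl (Fin.snoc c a : Fin (n + 2) → A) = Sgl a * wordProd Sgl c := by
  rw [wordProd_eq, Fin.snoc_last]
  have hc : (fun j : Fin (n+1) => (Fin.snoc c a : Fin (n+2) → A) j.castSucc) = c := by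
    funext j; simp
  rw [hc]

/-- A GL₂ element with prescribed first row, from a unimodularity witness. -/
def rowGL (a b r s : A) (h : r * a + s * b = 1) : GL (Fin 2) A :=
  ⟨!![a, b; -s, r], !![r, -b; s, a],
    by ext i j; fin_cases i <;> fin_cases j <;>
      simp [Matrix.mul_apply, Fin.sum_univ_two] <;>
      (first | ring1 | linear_combination h | linear_combination -h),
    by ext i j; fin_cases i <;> fin_cases j <;>
      simp [Matrix.mul_apply, Fin.sum_univ_two] <;>
      (first | ring1 | linear_combination h | linear_combination -h)⟩

lemma mk_eq_vInf_mul (v : UnimodRow A) :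
    ∃ M : GL (Fin 2) A, (⟦v⟧ : Vertex A) = vertexMul (vInf A) M := by
  obtain ⟨r, s, h⟩ := v.2
  refine ⟨rowGL (v.1 0) (v.1 1) r s h, ?_⟩
  rw [show vInf A = ⟦⟨![1,0],⟨1,0,by norm_num⟩⟩⟧ from rfl, vertexMul_mk]
  apply Quotient.sound
  refine ⟨1, ?_⟩
  show (1:A) • v.1 = vecMul ![1,0] ((rowGL (v.1 0) (v.1 1) r s h) : Matrix (Fin 2) (Fin 2) A)
  rw [one_smul]
  funext i
  fin_cases i <;> simp [rowGL, vecMul2]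
lemma wordProd_trivial : (wordProd Sgl ![(0:A), 0] : GL (Fin 2) A) = 1 := by
  have h1 : (wordProd Sgl ![(0:A), 0] : GL (Fin 2) A)
      = Sgl (![(0:A),0] (Fin.last 1)) * (Sgl ((fun j : Fin 1 => ![(0:A),0] j.castSucc) (Fin.last 0)) * 1) := by
    rw [wordProd_eq, wordProd_eq]
    rfl
  have e1 : (![(0:A),0]) (Fin.last 1) = 0 := rfl
  have e2 : ((fun j : Fin 1 => ![(0:A),0] j.castSucc) (Fin.last 0)) = 0 := rfl
  rw [h1, e1, e2]
  apply Units.ext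
  simp only [Units.val_mul, Units.val_one, mul_one]
  norm_num [Sgl, Matrix.mul_fin_two]
  exact (Matrix.one_fin_two).symm

lemma imp12 (h : (GammaGraph A).Connected) (v : UnimodRow A) :
    ∃ (n : ℕ) (c : Fin (n + 1) → A),
      (⟦v⟧ : Vertex A) = vertexMul (vInf A) (wordProd Sgl c) := by
  have key : ∀ (x z : Vertex A), (GammaGraph A).Walk x z → z = vInf A →
      ∃ (n : ℕ) (c : Fin (n + 1) → A), x = vertexMul (vInf A) (wordProd Sgl c) := by
    intro x z p
    induction p with
    | nil =>
        intro hz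
        exact ⟨1, ![0, 0], by rw [wordProd_trivial, vertexMul_one, hz]⟩
    | @cons x y _ hadj p ih =>
        intro hz
        obtain ⟨n, c, hy⟩ := ih hz
        have h1 : (GammaGraph A).Adj (vInf A) (vertexMul x (wordProd Sgl c)⁻¹) := by
          have h2 := adj_vertexMul (wordProd Sgl c)⁻¹ hadj
          rw [hy, vertexMul_mul, mul_inv_cancel, vertexMul_one] at h2
          exact h2.symm
        obtain ⟨a, ha⟩ := adj_vInf h1
        refine ⟨n + 1, Fin.snoc c a, ?_⟩
        rw [wordProd_snoc]
        have h3 := congrArg (fun z => vertexMul z (wordProd Sgl c)) ha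
        simp only [vertexMul_mul, inv_mul_cancel, vertexMul_one] at h3
        exact h3
  obtain ⟨p⟩ := h.preconnected (⟦v⟧ : Vertex A) (vInf A)
  exact key _ _ p rfl

lemma imp23
    (h : ∀ v : UnimodRow A, ∃ (n : ℕ) (c : Fin (n + 1) → A),
      (⟦v⟧ : Vertex A) = vertexMul (vInf A) (wordProd Sgl c))
    (a b : A) (hab : IsUnimod ![a, b]) : WeakEuclidean a b := by
  obtain ⟨n, c, hc⟩ := h ⟨![a, b], hab⟩
  rw [show vInf A = ⟦⟨![1,0],⟨1,0,by norm_num⟩⟩⟧ from rfl, vertexMul_mk] at hc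
  obtain ⟨t, ht⟩ := Quotient.eq.mp hc
  set W : Matrix (Fin 2) (Fin 2) A := ((wordProd Sgl c : GL (Fin 2) A) : Matrix (Fin 2) (Fin 2) A)
    with hWdef
  have ht' : (t : A) • ![a, b] = vecMul ![(1:A), 0] W := ht
  have hu : ((t⁻¹ : Aˣ) : A) • vecMul ![(1:A), 0] W = ![a, b] := by
    rw [← ht', smul_smul, Units.inv_mul, one_smul]
  set u : Aˣ := t⁻¹ with hudef
  classical
  set c' : ℕ → A := fun i => if hi : i < n + 1 then c ⟨i, hi⟩ else 0 with hc'
  set go : ℕ → A × A :=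
    fun k => Nat.rec ((0 : A), (u : A)) (fun k p => (p.2, c' (n - k) * p.2 + p.1)) k with hgo
  set r : ℕ → A := fun j => (go (n + 2 - j)).1 with hrdef
  have hgos : ∀ m : ℕ, go (m + 1) = ((go m).2, c' (n - m) * (go m).2 + (go m).1) :=
    fun m => rfl
  have hrec : ∀ k : Fin (n + 1), r k.1 = c k * r (k.1 + 1) + r (k.1 + 2) := by
    intro k
    have hk := k.2
    have e1 : n + 2 - k.1 = (n - k.1) + 2 := by omega
    have e2 : n + 2 - (k.1 + 1) = (n - k.1) + 1 := by omega
    have e3 : n + 2 - (k.1 + 2) = n - k.1 := by omega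
    have hnm : n - (n - k.1) = k.1 := by omega
    show (go (n + 2 - k.1)).1 = c k * (go (n + 2 - (k.1 + 1))).1 + (go (n + 2 - (k.1 + 2))).1
    rw [e1, e2, e3, hgos ((n - k.1) + 1), hgos (n - k.1)]
    simp only [hnm]
    congr 2
    show c' k.1 = c k
    rw [hc']
    simp only [dif_pos k.2]
  have hr1 : r (n + 1) = (u : A) := by
    show (go (n + 2 - (n + 1))).1 = (u : A)
    rw [show n + 2 - (n + 1) = 1 from by omega]
    rfl
  have hr2 : r (n + 2) = 0 := by
    show (go (n + 2 - (n + 2))).1 = 0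
    rw [show n + 2 - (n + 2) = 0 from by omega]
    rfl
  have hWP := vecMul_wordProd c r hrec
  rw [hr1, hr2] at hWP
  have hsm : ![(u : A), 0] = (u : A) • ![(1:A), 0] := by
    funext i; fin_cases i <;> simp
  have hab' : ![r 0, r 1] = ![a, b] := by
    rw [← hWP, hsm, Matrix.smul_vecMul]
    exact hu
  refine ⟨n, c, r, ?_, ?_, hr2, hrec⟩
  · have := congrFun hab' 0; simpa using this
  · have := congrFun hab' 1; simpa using this
lemma imp34 (h : ∀ a b : A, IsUnimod ![a, b] → WeakEuclidean a b) : GE2 A = ⊤ := by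
  rw [eq_top_iff]
  intro M _
  obtain ⟨da, hda⟩ := isUnit_det_gl M
  set a : A := (M : Matrix (Fin 2) (Fin 2) A) 0 0 with hadef
  set b : A := (M : Matrix (Fin 2) (Fin 2) A) 0 1 with hbdef
  have hab : IsUnimod ![a, b] := by
    refine ⟨(M : Matrix (Fin 2) (Fin 2) A) 1 1 * ((da⁻¹ : Aˣ) : A),
      -((M : Matrix (Fin 2) (Fin 2) A) 1 0) * ((da⁻¹ : Aˣ) : A), ?_⟩
    have hdet : (da : A) = (M : Matrix (Fin 2) (Fin 2) A) 0 0 *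
        (M : Matrix (Fin 2) (Fin 2) A) 1 1 - (M : Matrix (Fin 2) (Fin 2) A) 0 1 *
        (M : Matrix (Fin 2) (Fin 2) A) 1 0 := by rw [hda, Matrix.det_fin_two]
    have hinv : (da : A) * ((da⁻¹ : Aˣ) : A) = 1 := da.mul_inv
    simp only [Matrix.cons_val_zero, Matrix.cons_val_one, Matrix.head_cons]
    linear_combination hinv - ((da⁻¹ : Aˣ) : A) * hdet
  obtain ⟨n, q, r, hr0, hr1, hrn, hrec⟩ := h a b hab
  set W : GL (Fin 2) A := wordProd Sgl q with hWdef
  have hW : vecMul ![r (n+1), (0:A)] (W : Matrix (Fin 2) (Fin 2) A) = ![a, b] := by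
    have := vecMul_wordProd q r hrec
    rw [hrn, hr0, hr1] at this
    exact this
  have hWinv : (W : Matrix (Fin 2) (Fin 2) A) * ((W⁻¹ : GL (Fin 2) A) : Matrix (Fin 2) (Fin 2) A)
      = 1 := by
    rw [← Units.val_mul, mul_inv_cancel, Units.val_one]
  have hrowMab : vecMul ![(1:A), 0] (M : Matrix (Fin 2) (Fin 2) A) = ![a, b] := by
    rw [vecMul_e0]
  set N : GL (Fin 2) A := M * W⁻¹ with hNdef
  clear_value N
  have hrowN : vecMul ![(1:A), 0] (N : Matrix (Fin 2) (Fin 2) A) = ![r (n+1), 0] := by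
    rw [hNdef, Units.val_mul, ← Matrix.vecMul_vecMul, hrowMab, ← hW,
      Matrix.vecMul_vecMul, hWinv, Matrix.vecMul_one]
  have hN00 : (N : Matrix (Fin 2) (Fin 2) A) 0 0 = r (n+1) := by
    have := congrFun hrowN 0
    rw [vecMul_e0] at this
    simpa using this
  have hN01 : (N : Matrix (Fin 2) (Fin 2) A) 0 1 = 0 := by
    have := congrFun hrowN 1
    rw [vecMul_e0] at this
    simpa using this
  -- r (n+1) is a unit
  have huu : IsUnit (r (n+1)) := by
    have h5 : IsUnimod (vecMul ![a, b] ((W⁻¹ : GL (Fin 2) A) : Matrix (Fin 2) (Fin 2) A)) :=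
      isUnimod_vecMul hab W⁻¹
    rw [← hW, Matrix.vecMul_vecMul, hWinv, Matrix.vecMul_one] at h5
    obtain ⟨r', s', hr's⟩ := h5
    simp only [Matrix.cons_val_zero, Matrix.cons_val_one, Matrix.head_cons] at hr's
    exact IsUnit.of_mul_eq_one r' (by linear_combination hr's)
  obtain ⟨eu, heu⟩ := huu
  have hdd : IsUnit ((N : Matrix (Fin 2) (Fin 2) A) 1 1) := by
    obtain ⟨dn, hdn⟩ := isUnit_det_gl N
    have hdet : (dn : A) = r (n+1) * (N : Matrix (Fin 2) (Fin 2) A) 1 1 := by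
      rw [hdn, Matrix.det_fin_two, hN00, hN01]; ring
    have : IsUnit (r (n+1) * (N : Matrix (Fin 2) (Fin 2) A) 1 1) := hdet ▸ dn.isUnit
    exact isUnit_of_mul_isUnit_right this
  obtain ⟨ed, hed⟩ := hdd
  have hNeq : N = diagGL eu ed * E21gl (((ed⁻¹ : Aˣ) : A) * (N : Matrix (Fin 2) (Fin 2) A) 1 0) := by
    apply Units.ext
    have hRHS : ((diagGL eu ed * E21gl (((ed⁻¹ : Aˣ) : A) * (N : Matrix (Fin 2) (Fin 2) A) 1 0) :
        GL (Fin 2) A) : Matrix (Fin 2) (Fin 2) A)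
        = !![(eu : A), 0; (ed : A) * (((ed⁻¹ : Aˣ) : A) * (N : Matrix (Fin 2) (Fin 2) A) 1 0),
            (ed : A)] := by
      rw [Units.val_mul]
      show !![(eu:A), 0; 0, (ed:A)] * !![1, 0; ((ed⁻¹ : Aˣ) : A) * (N : Matrix (Fin 2) (Fin 2) A) 1 0, 1] = _
      rw [Matrix.mul_fin_two]
      norm_num
    rw [hRHS]
    ext i j
    fin_cases i <;> fin_cases j
    · simp [hN00, heu]
    · simp [hN01]
    · show (N : Matrix (Fin 2) (Fin 2) A) 1 0
          = !![(eu : A), 0;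
              (ed : A) * (((ed⁻¹ : Aˣ) : A) * (N : Matrix (Fin 2) (Fin 2) A) 1 0), (ed : A)] 1 0
      simp only [Matrix.cons_val_one, Matrix.cons_val_zero, Matrix.head_cons, Matrix.of_apply]
      (first
        | linear_combination ((N : Matrix (Fin 2) (Fin 2) A) 1 0) * ed.mul_inv
        | linear_combination (-((N : Matrix (Fin 2) (Fin 2) A) 1 0)) * ed.mul_inv
        | linear_combination ((N : Matrix (Fin 2) (Fin 2) A) 1 0) * ed.inv_mul
        | linear_combination (-((N : Matrix (Fin 2) (Fin 2) A) 1 0)) * ed.inv_mul)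
    · simp [hed]
  have hNmem : N ∈ GE2 A := by
    rw [hNeq]
    exact mul_mem (diagGL_mem _ _) (E21gl_mem _)
  have hMN : M = N * W := by
    rw [hNdef, inv_mul_cancel_right]
  rw [hMN]
  exact mul_mem hNmem (wordProd_Sgl_mem q)

lemma imp41 (h : GE2 A = ⊤) : (GammaGraph A).Connected := by
  have hreach : ∀ M : GL (Fin 2) A,
      (GammaGraph A).Reachable (vInf A) (vertexMul (vInf A) M) := by
    intro M
    have hM : M ∈ GE2 A := h ▸ Subgroup.mem_top M
    refine Subgroup.closure_induction ?_ ?_ ?_ ?_ hM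
    · rintro g (⟨⟨a, rfl⟩ | ⟨a, rfl⟩⟩ | ⟨h01, h10⟩)
      · -- E12 a : path ∞ — [0:1] — [1:a]
        have hrow : vertexMul (vInf A) (E12gl a)
            = ⟦(⟨![1, a], ⟨1, 0, by norm_num⟩⟩ : UnimodRow A)⟧ := by
          rw [show vInf A = ⟦⟨![1,0],⟨1,0,by norm_num⟩⟩⟧ from rfl, vertexMul_mk]
          apply Quotient.sound
          refine ⟨1, ?_⟩
          show (1:A) • vecMul ![(1:A),0] ((E12gl a : GL (Fin 2) A) : Matrix (Fin 2) (Fin 2) A)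
            = ![1, a]
          rw [one_smul]
          funext i
          fin_cases i <;> simp [E12gl, vecMul2]
        rw [hrow]
        have r1 : (GammaGraph A).Reachable
            (⟦⟨![1,0],⟨1,0,by norm_num⟩⟩⟧ : Vertex A) ⟦⟨![0,1],⟨0,1,by norm_num⟩⟩⟧ :=
          reach_of_det _ _ (by simp)
        have r2 : (GammaGraph A).Reachable
            (⟦⟨![0,1],⟨0,1,by norm_num⟩⟩⟧ : Vertex A) ⟦⟨![1,a],⟨1,0,by norm_num⟩⟩⟧ := by
          apply reach_of_det
          show IsUnit ((0:A) * a - 1 * 1)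
          simp
        exact r1.trans r2
      · -- E21 a fixes ∞
        have hrow : vertexMul (vInf A) (E21gl a) = vInf A := by
          rw [show vInf A = ⟦⟨![1,0],⟨1,0,by norm_num⟩⟩⟧ from rfl, vertexMul_mk]
          apply Quotient.sound
          refine ⟨1, ?_⟩
          show (1:A) • vecMul ![(1:A),0] ((E21gl a : GL (Fin 2) A) : Matrix (Fin 2) (Fin 2) A)
            = ![1, 0]
          rw [one_smul]
          funext i
          fin_cases i <;> simp [E21gl, vecMul2]
        rw [hrow]
      · -- diagonal fixes ∞
        have hg00 : IsUnit ((g : Matrix (Fin 2) (Fin 2) A) 0 0) := by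
          obtain ⟨dg, hdg⟩ := isUnit_det_gl g
          have : (dg : A) = (g : Matrix (Fin 2) (Fin 2) A) 0 0 *
              (g : Matrix (Fin 2) (Fin 2) A) 1 1 := by
            rw [hdg, Matrix.det_fin_two, h01, h10]; ring
          exact isUnit_of_mul_isUnit_left (this ▸ dg.isUnit)
        obtain ⟨e, he⟩ := hg00
        have hrow : vertexMul (vInf A) g = vInf A := by
          rw [show vInf A = ⟦⟨![1,0],⟨1,0,by norm_num⟩⟩⟧ from rfl, vertexMul_mk]
          apply Quotient.sound
          apply Setoid.symm
          refine ⟨e, ?_⟩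
          show (e : A) • ![(1:A), 0] = vecMul ![(1:A),0] (g : Matrix (Fin 2) (Fin 2) A)
          funext i
          fin_cases i <;> simp [vecMul2, he, h10, h01]
        rw [hrow]
    · rw [vertexMul_one]
    · intro x y _ _ px py
      have := reach_vertexMul y px
      rw [vertexMul_mul] at this
      exact py.trans this
    · intro x _ px
      have h2 := reach_vertexMul x⁻¹ px
      rw [vertexMul_mul, mul_inv_cancel, vertexMul_one] at h2
      exact h2.symm
  rw [SimpleGraph.connected_iff]
  refine ⟨?_, ⟨vInf A⟩⟩
  intro x y
  induction x using Quotient.ind with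
  | _ v =>
    induction y using Quotient.ind with
    | _ w =>
      obtain ⟨Mv, hMv⟩ := mk_eq_vInf_mul v
      obtain ⟨Mw, hMw⟩ := mk_eq_vInf_mul w
      rw [hMv, hMw]
      exact (hreach Mv).symm.trans (hreach Mw)
end Aux


/-- The following are equivalent: (1) Γ(A) is connected; (2) every
unimodular row is of the form ∞·S(aₙ)⋯S(a₀); (3) every unimodular pair satisfies a weak
Euclidean algorithm; (4) A is a GE₂-ring. -/
theorem stmt9 (A : Type*) [CommRing A] :
    List.TFAE
      [(GammaGraph A).Connected,
       ∀ v : UnimodRow A, ∃ (n : ℕ) (c : Fin (n + 1) → A),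
         (⟦v⟧ : Vertex A) = vertexMul (vInf A) (wordProd Sgl c),
       ∀ a b : A, IsUnimod ![a, b] → WeakEuclidean a b,
       GE2 A = ⊤] := by
  tfae_have 1 → 2 := fun h v => imp12 h v
  tfae_have 2 → 3 := fun h a b hab => imp23 h a b hab
  tfae_have 3 → 4 := imp34
  tfae_have 4 → 1 := imp41
  tfae_finish
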